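/- Let k and n be integers with 3 ≤ k < n, and let Q : ℝ → ℝ be (k−1)-times continuously differentiable on [0,1) with Q^{(i)}(t) > 0 for every i ∈ {1, …, k−1} and every t ∈ [0,1). Then the function b(t) := Q(t) + Σ_{i=1}^{k−2} C(k−2,i) · ((n−k)!/(n−k+i)!) · t^i · Q^{(i)}(t) is strictly increasing on [0,1). -/

import Mathlib

open Set

lemma iDW_nhds {f : ℝ → ℝ} (m : ℕ) {s : Set ℝ} {x : ℝ} (hx : s ∈ nhds x) :
    iteratedDerivWithin m f s x = iteratedDeriv m f x := by
  rw [iteratedDerivWithin_eq_iteratedFDerivWithin, iteratedDeriv_eq_iteratedFDeriv,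
    ← iteratedFDerivWithin_univ, ← univ_inter s, iteratedFDerivWithin_inter hx,
    iteratedFDerivWithin_univ]

theorem bid_function_strictMono_of_deriv_pos
    (k n : ℕ) (hk : 3 ≤ k) (hkn : k < n)
    (Q : ℝ → ℝ)
    (hQsmooth : ContDiffOn ℝ (k - 1 : ℕ) Q (Ico (0:ℝ) 1))
    (hQpos : ∀ i ∈ Finset.Icc 1 (k - 1), ∀ t ∈ Ico (0:ℝ) 1, 0 < iteratedDeriv i Q t) :
    StrictMonoOn (fun t => Q t + ∑ i ∈ Finset.Icc 1 (k - 2),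
        ((k - 2).choose i : ℝ) * (((n - k).factorial : ℝ) / ((n - k + i).factorial : ℝ)) *
          t ^ i * iteratedDeriv i Q t)
      (Ico (0:ℝ) 1) := by
  set c : ℕ → ℝ := fun i =>
    ((k - 2).choose i : ℝ) * (((n - k).factorial : ℝ) / ((n - k + i).factorial : ℝ)) with hc
  have hcnn : ∀ i, 0 ≤ c i := by
    intro i
    have h2 : (0:ℝ) < ((n - k).factorial : ℝ) := by exact_mod_cast (n-k).factorial_pos
    have h3 : (0:ℝ) < ((n - k + i).factorial : ℝ) := by exact_mod_cast (n-k+i).factorial_pos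
    have h1 : (0:ℝ) ≤ ((k - 2).choose i : ℝ) := by positivity
    positivity
  have hk1 : k - 1 = (k - 2) + 1 := by omega
  have hud : UniqueDiffOn ℝ (Ico (0:ℝ) 1) := uniqueDiffOn_Ico 0 1
  have hIco_nhds : ∀ x ∈ Ioo (0:ℝ) 1, Ico (0:ℝ) 1 ∈ nhds x := fun x hx =>
    Filter.mem_of_superset (isOpen_Ioo.mem_nhds hx) Ioo_subset_Ico_self
  -- equality within at interior points
  have heq : ∀ (i : ℕ), ∀ x ∈ Ioo (0:ℝ) 1,
      iteratedDerivWithin i Q (Ico 0 1) x = iteratedDeriv i Q x := fun i x hx =>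
    iDW_nhds i (hIco_nhds x hx)
  -- Continuity of the "within" version of the function on Ico
  have hcont : ContinuousOn (fun t => Q t + ∑ i ∈ Finset.Icc 1 (k - 2),
      c i * t ^ i * iteratedDerivWithin i Q (Ico 0 1) t) (Ico (0:ℝ) 1) := by
    apply ContinuousOn.add hQsmooth.continuousOn
    apply continuousOn_finset_sum
    intro i hi
    simp only [Finset.mem_Icc] at hi
    have hile : (i : WithTop ℕ∞) ≤ ((k - 1 : ℕ) : WithTop ℕ∞) := by
      have hik : i ≤ k - 1 := by omega
      exact_mod_cast hik
    exact ((continuousOn_const.mul (continuousOn_pow i)).mul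
      (hQsmooth.continuousOn_iteratedDerivWithin hile hud))
  -- the two functions agree on Ico
  have hagree : ∀ t ∈ Ico (0:ℝ) 1,
      (Q t + ∑ i ∈ Finset.Icc 1 (k - 2),
        c i * t ^ i * iteratedDerivWithin i Q (Ico 0 1) t)
      = Q t + ∑ i ∈ Finset.Icc 1 (k - 2), c i * t ^ i * iteratedDeriv i Q t := by
    intro t ht
    congr 1
    apply Finset.sum_congr rfl
    intro i hi
    simp only [Finset.mem_Icc] at hi
    rcases eq_or_lt_of_le ht.1 with h0 | h0
    · have : t ^ i = 0 := by
        rw [← h0]; exact zero_pow (by omega)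
      simp [this]
    · rw [heq i t ⟨h0, ht.2⟩]
  -- differentiability and derivative at interior points
  have hderiv : ∀ i : ℕ, i < k - 1 → ∀ x ∈ Ioo (0:ℝ) 1,
      HasDerivAt (iteratedDeriv i Q) (iteratedDeriv (i+1) Q x) x := by
    intro i hi x hx
    have hdiff : DifferentiableWithinAt ℝ (iteratedDerivWithin i Q (Ico 0 1)) (Ico 0 1) x :=
      hQsmooth.differentiableOn_iteratedDerivWithin
        (by exact_mod_cast Nat.cast_lt.mpr hi) hud x (Ioo_subset_Ico_self hx)
    have hdiff' : DifferentiableAt ℝ (iteratedDerivWithin i Q (Ico 0 1)) x :=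
      hdiff.differentiableAt (hIco_nhds x hx)
    have hcongr : iteratedDerivWithin i Q (Ico 0 1) =ᶠ[nhds x] iteratedDeriv i Q := by
      filter_upwards [isOpen_Ioo.mem_nhds hx] with y hy using heq i y hy
    have hdiff2 : DifferentiableAt ℝ (iteratedDeriv i Q) x := hdiff'.congr_of_eventuallyEq hcongr.symm
    have := hdiff2.hasDerivAt
    rwa [← iteratedDeriv_succ] at this
  -- main: strict mono
  have key := strictMonoOn_of_deriv_pos (convex_Ico (0:ℝ) 1)
    (f := fun t => Q t + ∑ i ∈ Finset.Icc 1 (k - 2),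
        c i * t ^ i * iteratedDerivWithin i Q (Ico 0 1) t) hcont ?_
  · intro a ha b hb hab
    have h := key ha hb hab
    simp only [hagree a ha, hagree b hb] at h
    exact h
  · intro x hx
    rw [interior_Ico] at hx
    -- compute the derivative
    have hQ1 : HasDerivAt Q (iteratedDeriv 1 Q x) x := by
      have := hderiv 0 (by omega) x hx
      simpa [iteratedDeriv_zero] using this
    have hsum : HasDerivAt (fun t => ∑ i ∈ Finset.Icc 1 (k - 2),
        c i * t ^ i * iteratedDeriv i Q t)
        (∑ i ∈ Finset.Icc 1 (k - 2),
          (c i * (↑i * x ^ (i-1)) * iteratedDeriv i Q x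
            + c i * x ^ i * iteratedDeriv (i+1) Q x)) x := by
      apply HasDerivAt.fun_sum
      intro i hi
      simp only [Finset.mem_Icc] at hi
      have hpow : HasDerivAt (fun t : ℝ => c i * t ^ i) (c i * (↑i * x ^ (i-1))) x :=
        (hasDerivAt_pow i x).const_mul (c i)
      exact hpow.mul (hderiv i (by omega) x hx)
    have hb : HasDerivAt (fun t => Q t + ∑ i ∈ Finset.Icc 1 (k - 2),
        c i * t ^ i * iteratedDeriv i Q t)
        (iteratedDeriv 1 Q x + ∑ i ∈ Finset.Icc 1 (k - 2),
          (c i * (↑i * x ^ (i-1)) * iteratedDeriv i Q x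
            + c i * x ^ i * iteratedDeriv (i+1) Q x)) x := hQ1.add hsum
    have hbw : HasDerivAt (fun t => Q t + ∑ i ∈ Finset.Icc 1 (k - 2),
        c i * t ^ i * iteratedDerivWithin i Q (Ico 0 1) t)
        (iteratedDeriv 1 Q x + ∑ i ∈ Finset.Icc 1 (k - 2),
          (c i * (↑i * x ^ (i-1)) * iteratedDeriv i Q x
            + c i * x ^ i * iteratedDeriv (i+1) Q x)) x := by
      apply hb.congr_of_eventuallyEq
      filter_upwards [isOpen_Ioo.mem_nhds hx] with y hy
      exact hagree y (Ioo_subset_Ico_self hy)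
    rw [hbw.deriv]
    have hx' : x ∈ Ico (0:ℝ) 1 := Ioo_subset_Ico_self hx
    have h1 : 0 < iteratedDeriv 1 Q x :=
      hQpos 1 (Finset.mem_Icc.mpr ⟨le_refl 1, by omega⟩) x hx'
    have h2 : 0 ≤ ∑ i ∈ Finset.Icc 1 (k - 2),
        (c i * (↑i * x ^ (i-1)) * iteratedDeriv i Q x
          + c i * x ^ i * iteratedDeriv (i+1) Q x) := by
      apply Finset.sum_nonneg
      intro i hi
      simp only [Finset.mem_Icc] at hi
      have hdi : 0 < iteratedDeriv i Q x :=
        hQpos i (Finset.mem_Icc.mpr ⟨hi.1, by omega⟩) x hx'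
      have hdi1 : 0 < iteratedDeriv (i+1) Q x :=
        hQpos (i+1) (Finset.mem_Icc.mpr ⟨by omega, by omega⟩) x hx'
      have hxnn : (0:ℝ) ≤ x := hx'.1
      have := hcnn i
      positivity
    linarith
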